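/- Write the characteristic polynomial of Q0 as det(X*Id - Q0) = X^3 + t*X^2 + r*X + 9*s (so t = -trace(Q0) and s = -det(Q0)/9). Then det(Q) = 9 - 3*t + r - 3*s. -/
import Mathlib


open Matrix Polynomial

set_option maxRecDepth 8000 in
set_option maxHeartbeats 1600000 in
/-- If the characteristic polynomial of `Q0 = I3 * Mᵀ * I4 * M` is
`X³ + t·X² + r·X + 9s`, then the Gram matrix `Q` satisfies `det Q = 9 - 3t + r - 3s`. -/
theorem stmt14 {K : Type*} [Field K] (hchar2 : (2 : K) ≠ 0) (hchar3 : (3 : K) ≠ 0)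
    (a1 a2 a3 a4 b1 b2 b3 b4 c1 c2 c3 c4 t r s : K)
    (hchar : ((Matrix.diagonal ![1, 3, 1] : Matrix (Fin 3) (Fin 3) K) *
        (!![a1, b1, c1; a2, b2, c2; a3, b3, c3; a4, b4, c4] : Matrix (Fin 4) (Fin 3) K)ᵀ *
        (Matrix.diagonal ![1, 3, 1, 3] : Matrix (Fin 4) (Fin 4) K) *
        !![a1, b1, c1; a2, b2, c2; a3, b3, c3; a4, b4, c4]).charpoly =
      X^3 + C t * X^2 + C r * X + C (9*s)) :
    (!![3 + a1^2 + 3*a2^2 + a3^2 + 3*a4^2, a1*b1 + 3*a2*b2 + a3*b3 + 3*a4*b4,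
          a1*c1 + 3*a2*c2 + a3*c3 + 3*a4*c4;
        a1*b1 + 3*a2*b2 + a3*b3 + 3*a4*b4, 1 + b1^2 + 3*b2^2 + b3^2 + 3*b4^2,
          b1*c1 + 3*b2*c2 + b3*c3 + 3*b4*c4;
        a1*c1 + 3*a2*c2 + a3*c3 + 3*a4*c4, b1*c1 + 3*b2*c2 + b3*c3 + 3*b4*c4,
          3 + c1^2 + 3*c2^2 + c3^2 + 3*c4^2] : Matrix (Fin 3) (Fin 3) K).det
      = 9 - 3*t + r - 3*s := by
  have hA : ((Matrix.diagonal ![1, 3, 1] : Matrix (Fin 3) (Fin 3) K) *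
        (!![a1, b1, c1; a2, b2, c2; a3, b3, c3; a4, b4, c4] : Matrix (Fin 4) (Fin 3) K)ᵀ *
        (Matrix.diagonal ![1, 3, 1, 3] : Matrix (Fin 4) (Fin 4) K) *
        !![a1, b1, c1; a2, b2, c2; a3, b3, c3; a4, b4, c4]) =
      !![a1*a1 + 3*(a2*a2) + a3*a3 + 3*(a4*a4),
         a1*b1 + 3*(a2*b2) + a3*b3 + 3*(a4*b4),
         a1*c1 + 3*(a2*c2) + a3*c3 + 3*(a4*c4);
         3*(a1*b1 + 3*(a2*b2) + a3*b3 + 3*(a4*b4)),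
         3*(b1*b1 + 3*(b2*b2) + b3*b3 + 3*(b4*b4)),
         3*(b1*c1 + 3*(b2*c2) + b3*c3 + 3*(b4*c4));
         a1*c1 + 3*(a2*c2) + a3*c3 + 3*(a4*c4),
         b1*c1 + 3*(b2*c2) + b3*c3 + 3*(b4*c4),
         c1*c1 + 3*(c2*c2) + c3*c3 + 3*(c4*c4)] := by
    ext i j
    fin_cases i <;> fin_cases j <;>
      simp [Matrix.mul_apply, Fin.sum_univ_succ, Matrix.diagonal] <;> ring
  rw [hA] at hchar
  have h := congrArg (Polynomial.eval (-3 : K)) hchar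
  rw [Matrix.charpoly, Matrix.det_fin_three] at h
  simp [charmatrix_apply, Matrix.diagonal] at h
  simp [Matrix.det_fin_three]
  apply mul_left_cancel₀ hchar3
  linear_combination (-1 : K) * h
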